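/- Let P be a lazy, irreducible, aperiodic Markov chain on a finite state space K with stationary distribution π, and let A ⊆ K with 0 < π(A) ≤ 1/2. Then ψ̄_gl(A) ≥ (1/2)·ψ̄_mod(A). -/

import Mathlib

open Finset MeasureTheory

noncomputable section

attribute [local instance] Classical.propDecidable

variable {K : Type*} [Fintype K]

/-- `matPow P t u v` is the `t`-step transition probability from `u` to `v`. -/
def matPow (P : K → K → ℝ) : ℕ → K → K → ℝ
  | 0 => fun u v => if u = v then 1 else 0
  | (t + 1) => fun u v => ∑ w, matPow P t u w * P w v

/-- `P` is a stochastic matrix with (strictly positive) stationary distribution `π`. -/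
structure IsMarkov (P : K → K → ℝ) (π : K → ℝ) : Prop where
  nonneg : ∀ u v, 0 ≤ P u v
  rowSum : ∀ u, ∑ v, P u v = 1
  piPos : ∀ v, 0 < π v
  piSum : ∑ v, π v = 1
  stationary : ∀ v, ∑ u, π u * P u v = π v

/-- `P` is lazy: every holding probability is at least `1/2`. -/
def IsLazy (P : K → K → ℝ) : Prop := ∀ u, (1 : ℝ) / 2 ≤ P u u

/-- irreducibility: every state can reach every other state. -/
def MCIrreducible (P : K → K → ℝ) : Prop := ∀ u v : K, ∃ t : ℕ, 0 < matPow P t u v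

/-- aperiodicity: the gcd of the return times of every state is `1`. -/
def MCAperiodic (P : K → K → ℝ) : Prop :=
  ∀ u : K, ∀ d : ℕ, (∀ t : ℕ, 0 < matPow P t u u → d ∣ t) → d ≤ 1

/-- reversibility: the detailed balance condition. -/
def IsReversible (P : K → K → ℝ) (π : K → ℝ) : Prop :=
  ∀ u v, π u * P u v = π v * P v u

/-- `π`-measure of a set. -/
def meas (π : K → ℝ) (A : Finset K) : ℝ := ∑ v ∈ A, π v

/-- the time reversal `P̄(u,v) = π(v) P(v,u) / π(u)`. -/
def rev (P : K → K → ℝ) (π : K → ℝ) (u v : K) : ℝ := π v * P v u / π u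

/-- transition probability from a point into a set, w.r.t. kernel `R`. -/
def setProb (R : K → K → ℝ) (v : K) (C : Finset K) : ℝ := ∑ c ∈ C, R v c

/-- the level set `A_u = {y : R(y,A) > u}`, w.r.t. kernel `R`. -/
def levelSet (R : K → K → ℝ) (A : Finset K) (u : ℝ) : Finset K :=
  Finset.univ.filter (fun y => u < setProb R y A)

/-- `g` is a fractional subset of `S` of measure `t`. -/
def IsFracSub (π : K → ℝ) (S : Finset K) (g : K → ℝ) (t : ℝ) : Prop :=
  (∀ v, 0 ≤ g v ∧ g v ≤ 1) ∧ (∀ v ∉ S, g v = 0) ∧ ∑ v, g v * π v = t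

/-- ergodic flow from a fractional subset `g` into `C`, w.r.t. kernel `R`. -/
def fracFlow (R : K → K → ℝ) (π : K → ℝ) (g : K → ℝ) (C : Finset K) : ℝ :=
  ∑ v, g v * π v * setProb R v C

/-- `Ψ(t, Aᶜ)` w.r.t. kernel `R`: for `t ≤ π(A)` the minimal flow into `Aᶜ` from a
fractional subset of `A` of measure `t`; for `t > π(A)` the minimal flow into `A`
from a fractional subset of `Aᶜ` of measure `1 − t`. -/
def Psi (R : K → K → ℝ) (π : K → ℝ) (A : Finset K) (t : ℝ) : ℝ :=
  if t ≤ meas π A then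
    sInf {q : ℝ | ∃ g : K → ℝ, IsFracSub π A g t ∧ q = fracFlow R π g Aᶜ}
  else
    sInf {q : ℝ | ∃ g : K → ℝ, IsFracSub π Aᶜ g (1 - t) ∧ q = fracFlow R π g A}

/-- `Ψ_big(t, Aᶜ)` w.r.t. kernel `R`: maximal flow into `Aᶜ` from a fractional
subset of `A` of measure `t`. -/
def PsiSup (R : K → K → ℝ) (π : K → ℝ) (A : Finset K) (t : ℝ) : ℝ :=
  sSup {q : ℝ | ∃ g : K → ℝ, IsFracSub π A g t ∧ q = fracFlow R π g Aᶜ}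

/-- the spread `ψ⁺(A)` (w.r.t. kernel `R`). -/
def psiPlus (R : K → K → ℝ) (π : K → ℝ) (A : Finset K) : ℝ :=
  (∫ t in (0:ℝ)..(meas π A), Psi R π A t) / (meas π A) ^ 2

/-- the quantity `ψ⁻(A)` (w.r.t. kernel `R`). -/
def psiMinus (R : K → K → ℝ) (π : K → ℝ) (A : Finset K) : ℝ :=
  (∫ t in (meas π A)..(1:ℝ), Psi R π A t) / (meas π A) ^ 2

/-- the modified spread `ψ_mod(A)` (w.r.t. kernel `R`). -/
def psiMod (R : K → K → ℝ) (π : K → ℝ) (A : Finset K) : ℝ :=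
  (∫ t in (0:ℝ)..(1:ℝ), Psi R π A t / min t (1 - t)) / meas π A

/-- the global spread `ψ_gl(A)` (w.r.t. kernel `R`). -/
def psiGl (R : K → K → ℝ) (π : K → ℝ) (A : Finset K) : ℝ :=
  (∫ t in (0:ℝ)..(1:ℝ), Psi R π A t) / (meas π A) ^ 2

/-- the quantity `ψ_big(A)` (w.r.t. kernel `R`). -/
def psiBig (R : K → K → ℝ) (π : K → ℝ) (A : Finset K) : ℝ :=
  (∫ t in (0:ℝ)..(meas π A), PsiSup R π A t) / (meas π A) ^ 2

/-- the evolving-set quantity `ψ_evo(A)`, with level sets taken w.r.t. kernel `R`. -/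
def psiEvo (R : K → K → ℝ) (π : K → ℝ) (A : Finset K) : ℝ :=
  1 - ∫ u in (0:ℝ)..(1:ℝ), Real.sqrt (meas π (levelSet R A u) / meas π A)

/-- ergodic flow `Q(B,C)`. -/
def ergFlow (P : K → K → ℝ) (π : K → ℝ) (B C : Finset K) : ℝ :=
  ∑ u ∈ B, ∑ v ∈ C, π u * P u v

/-- conductance `Φ(A)`. -/
def conductance (P : K → K → ℝ) (π : K → ℝ) (A : Finset K) : ℝ :=
  ergFlow P π A Aᶜ / meas π A

def Qone (P : K → K → ℝ) (π : K → ℝ) (C D : Finset K) : ℝ :=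
  ∑ v ∈ C, setProb P v D * π v

def Qtwo (P : K → K → ℝ) (π : K → ℝ) (C D : Finset K) : ℝ :=
  ∑ v ∈ C, Real.sqrt (setProb P v D) * π v

def Qinfty (P : K → K → ℝ) (π : K → ℝ) (C D : Finset K) : ℝ :=
  meas π (C.filter (fun v => 0 < setProb P v D))

/-- discrete gradient `h₁⁺(A)`. -/
def hOneP (P : K → K → ℝ) (π : K → ℝ) (A : Finset K) : ℝ :=
  Qone P π A Aᶜ / min (meas π A) (meas π Aᶜ)

/-- discrete gradient `h₁⁻(A)`. -/
def hOneM (P : K → K → ℝ) (π : K → ℝ) (A : Finset K) : ℝ :=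
  Qone P π Aᶜ A / min (meas π A) (meas π Aᶜ)

/-- discrete gradient `h₂⁺(A)`. -/
def hTwoP (P : K → K → ℝ) (π : K → ℝ) (A : Finset K) : ℝ :=
  Qtwo P π A Aᶜ / min (meas π A) (meas π Aᶜ)

/-- discrete gradient `h₂⁻(A)`. -/
def hTwoM (P : K → K → ℝ) (π : K → ℝ) (A : Finset K) : ℝ :=
  Qtwo P π Aᶜ A / min (meas π A) (meas π Aᶜ)

/-- discrete gradient `h_∞⁺(A)`. -/
def hInfP (P : K → K → ℝ) (π : K → ℝ) (A : Finset K) : ℝ :=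
  Qinfty P π A Aᶜ / min (meas π A) (meas π Aᶜ)

/-- discrete gradient `h_∞⁻(A)`. -/
def hInfM (P : K → K → ℝ) (π : K → ℝ) (A : Finset K) : ℝ :=
  Qinfty P π Aᶜ A / min (meas π A) (meas π Aᶜ)

/-- `p` is a probability distribution. -/
def IsDist (p : K → ℝ) : Prop := (∀ v, 0 ≤ p v) ∧ ∑ v, p v = 1

/-- the distribution after `t` steps starting from `p`. -/
def stepDist (P : K → K → ℝ) (p : K → ℝ) (t : ℕ) (v : K) : ℝ :=
  ∑ u, p u * matPow P t u v

/-- total variation distance. -/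
def tvDist (μ π : K → ℝ) : ℝ := (1 / 2) * ∑ v, |μ v - π v|

/-- chi-square distance. -/
def chi2Dist (μ π : K → ℝ) : ℝ := ∑ v, (μ v / π v - 1) ^ 2 * π v

/-- total variation mixing time `τ(ε)`: the max over initial distributions of the
least time at which total variation distance drops to `ε`. -/
def mixTV (P : K → K → ℝ) (π : K → ℝ) (ε : ℝ) : ℕ :=
  sSup {n : ℕ | ∃ p : K → ℝ, IsDist p ∧
    n = sInf {t : ℕ | tvDist (stepDist P p t) π ≤ ε}}

/-- chi-square mixing time `χ²(ε)`. -/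
def mixChi2 (P : K → K → ℝ) (π : K → ℝ) (ε : ℝ) : ℕ :=
  sSup {n : ℕ | ∃ p : K → ℝ, IsDist p ∧
    n = sInf {t : ℕ | chi2Dist (stepDist P p t) π ≤ ε}}

/-- `π₀ = min_v π(v)`. -/
def piMin (π : K → ℝ) : ℝ := sInf {r : ℝ | ∃ v : K, r = π v}

/-- `ψ⁺(x)`: worst spread over sets of measure at most `x`. -/
def psiPlusSize (R : K → K → ℝ) (π : K → ℝ) (x : ℝ) : ℝ :=
  sInf {r : ℝ | ∃ A : Finset K, 0 < meas π A ∧ meas π A ≤ x ∧ r = psiPlus R π A}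

/-- `ψ_evo(x)`: worst evolving-set quantity over sets of measure at most `x`. -/
def psiEvoSize (R : K → K → ℝ) (π : K → ℝ) (x : ℝ) : ℝ :=
  sInf {r : ℝ | ∃ A : Finset K, 0 < meas π A ∧ meas π A ≤ x ∧ r = psiEvo R π A}

/-- `ψ_big(x)`: worst `ψ_big` over sets of measure at most `x`. -/
def psiBigSize (R : K → K → ℝ) (π : K → ℝ) (x : ℝ) : ℝ :=
  sInf {r : ℝ | ∃ A : Finset K, 0 < meas π A ∧ meas π A ≤ x ∧ r = psiBig R π A}

/-- Dirichlet form. -/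
def dirichletForm (P : K → K → ℝ) (π : K → ℝ) (f : K → ℝ) : ℝ :=
  (1 / 2) * ∑ u, ∑ v, π u * P u v * (f u - f v) ^ 2

/-- variance w.r.t. `π`. -/
def varPi (π : K → ℝ) (f : K → ℝ) : ℝ :=
  ∑ v, π v * f v ^ 2 - (∑ v, π v * f v) ^ 2

/-- the spectral gap `λ`. -/
def specGap (P : K → K → ℝ) (π : K → ℝ) : ℝ :=
  sInf {r : ℝ | ∃ f : K → ℝ, (∃ u v, f u ≠ f v) ∧ r = dirichletForm P π f / varPi π f}

/-- `P_* = 1 − min_{u ∈ A} P(u, A)`. -/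
def Pstar (P : K → K → ℝ) (A : Finset K) : ℝ :=
  1 - sInf {r : ℝ | ∃ u ∈ A, r = setProb P u A}

/-- `P_min = min {P(u,v)/π(v) : u ∈ A, v ∈ Aᶜ, P(u,v) > 0}`. -/
def PminEdge (P : K → K → ℝ) (π : K → ℝ) (A : Finset K) : ℝ :=
  sInf {r : ℝ | ∃ u ∈ A, ∃ v ∈ Aᶜ, 0 < P u v ∧ r = P u v / π v}

/-- `w(t) = inf {y ∈ [0,1] : π(A_y) ≤ t}`. -/
def wfun (R : K → K → ℝ) (π : K → ℝ) (A : Finset K) (t : ℝ) : ℝ :=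
  sInf {y : ℝ | y ∈ Set.Icc (0:ℝ) 1 ∧ meas π (levelSet R A y) ≤ t}

-- SPLICE START
section Aux

variable {K : Type*} [Fintype K]

/-- the generic constraint set appearing in `Psi`. -/
def Sset (R : K → K → ℝ) (π : K → ℝ) (B C : Finset K) (t : ℝ) : Set ℝ :=
  {q : ℝ | ∃ g : K → ℝ, IsFracSub π B g t ∧ q = fracFlow R π g C}

lemma rev_nonneg {P : K → K → ℝ} {π : K → ℝ} (hM : IsMarkov P π) (u v : K) :
    0 ≤ rev P π u v :=
  div_nonneg (mul_nonneg (hM.piPos v).le (hM.nonneg v u)) (hM.piPos u).le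

lemma setProb_rev_nonneg {P : K → K → ℝ} {π : K → ℝ} (hM : IsMarkov P π) (v : K) (C : Finset K) :
    0 ≤ setProb (rev P π) v C :=
  Finset.sum_nonneg fun c _ => rev_nonneg hM v c

lemma fracFlow_nonneg {P : K → K → ℝ} {π : K → ℝ} (hM : IsMarkov P π) {g : K → ℝ}
    (hg : ∀ v, 0 ≤ g v) (C : Finset K) : 0 ≤ fracFlow (rev P π) π g C :=
  Finset.sum_nonneg fun v _ =>
    mul_nonneg (mul_nonneg (hg v) (hM.piPos v).le) (setProb_rev_nonneg hM v C)

lemma Sset_nonneg {P : K → K → ℝ} {π : K → ℝ} (hM : IsMarkov P π) {B C : Finset K} {t : ℝ} :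
    ∀ q ∈ Sset (rev P π) π B C t, 0 ≤ q := by
  rintro q ⟨g, hg, rfl⟩
  exact fracFlow_nonneg hM (fun v => (hg.1 v).1) C

lemma Sset_bddBelow {P : K → K → ℝ} {π : K → ℝ} (hM : IsMarkov P π) {B C : Finset K} {t : ℝ} :
    BddBelow (Sset (rev P π) π B C t) :=
  ⟨0, fun _ hq => Sset_nonneg hM _ hq⟩

lemma sInf_Sset_zero {P : K → K → ℝ} {π : K → ℝ} (hM : IsMarkov P π) (B C : Finset K) :
    sInf (Sset (rev P π) π B C 0) = 0 := by
  have h0 : (0:ℝ) ∈ Sset (rev P π) π B C 0 := by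
    refine ⟨fun _ => 0, ⟨fun v => ⟨le_refl _, zero_le_one⟩, fun _ _ => rfl, by simp⟩, ?_⟩
    simp [fracFlow]
  exact le_antisymm (csInf_le (Sset_bddBelow hM) h0) (Real.sInf_nonneg (Sset_nonneg hM))

lemma indicator_fracSub {π : K → ℝ} (hpi : ∀ v, 0 < π v) (B : Finset K) (hB : 0 < meas π B)
    {t : ℝ} (h0 : 0 ≤ t) (h1 : t ≤ meas π B) :
    IsFracSub π B (fun v => if v ∈ B then t / meas π B else 0) t := by
  refine ⟨fun v => ?_, fun v hv => by simp [hv], ?_⟩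
  · by_cases hv : v ∈ B
    · simp only [if_pos hv]
      exact ⟨div_nonneg h0 hB.le, (div_le_one hB).2 h1⟩
    · simp [hv]
  · have h : ∀ v, (if v ∈ B then t / meas π B else 0) * π v
        = if v ∈ B then (t / meas π B) * π v else 0 := by
      intro v; split <;> ring
    rw [Finset.sum_congr rfl fun v _ => h v, Finset.sum_ite_mem, Finset.univ_inter,
      ← Finset.mul_sum]
    exact div_mul_cancel₀ t hB.ne'

lemma fracSub_smul {π : K → ℝ} {B : Finset K} {g : K → ℝ} {t : ℝ}
    (h : IsFracSub π B g t) {c : ℝ} (hc : 0 ≤ c) (hc1 : c ≤ 1) :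
    IsFracSub π B (fun v => c * g v) (c * t) := by
  obtain ⟨h1, h2, h3⟩ := h
  refine ⟨fun v => ⟨mul_nonneg hc (h1 v).1, ?_⟩, fun v hv => by simp [h2 v hv], ?_⟩
  · show c * g v ≤ 1
    nlinarith [(h1 v).1, (h1 v).2]
  · rw [← h3, Finset.mul_sum]
    exact Finset.sum_congr rfl fun v _ => by ring

lemma fracFlow_smul {R : K → K → ℝ} {π : K → ℝ} {g : K → ℝ} (c : ℝ) (C : Finset K) :
    fracFlow R π (fun v => c * g v) C = c * fracFlow R π g C := by
  unfold fracFlow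
  rw [Finset.mul_sum]
  exact Finset.sum_congr rfl fun v _ => by ring

lemma ind_flow_smul {R : K → K → ℝ} {π : K → ℝ} (c : ℝ) (B C : Finset K) :
    fracFlow R π (fun v => if v ∈ B then c else 0) C
      = c * fracFlow R π (fun v => if v ∈ B then (1:ℝ) else 0) C := by
  unfold fracFlow
  rw [Finset.mul_sum]
  refine Finset.sum_congr rfl fun v _ => ?_
  beta_reduce
  split <;> ring

lemma Sset_nonempty {P : K → K → ℝ} {π : K → ℝ} (hM : IsMarkov P π) {B : Finset K}
    (C : Finset K) (hB : 0 < meas π B) {t : ℝ} (h0 : 0 ≤ t) (h1 : t ≤ meas π B) :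
    (Sset (rev P π) π B C t).Nonempty :=
  ⟨_, ⟨_, indicator_fracSub hM.piPos B hB h0 h1, rfl⟩⟩

lemma sInf_Sset_smul {P : K → K → ℝ} {π : K → ℝ} (hM : IsMarkov P π) (B C : Finset K)
    {t c : ℝ} (hc0 : 0 ≤ c) (hc1 : c ≤ 1) (ht0 : 0 ≤ t) (htB : t ≤ meas π B)
    (hB : 0 < meas π B) :
    sInf (Sset (rev P π) π B C (c * t)) ≤ c * sInf (Sset (rev P π) π B C t) := by
  rcases eq_or_lt_of_le hc0 with rfl | hc
  · rw [zero_mul, zero_mul, sInf_Sset_zero hM]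
  · have hne := Sset_nonempty hM (P := P) C hB ht0 htB
    rw [show c * sInf (Sset (rev P π) π B C t) = sInf (Sset (rev P π) π B C t) * c from
      mul_comm _ _, ← div_le_iff₀ hc]
    refine le_csInf hne ?_
    rintro q ⟨g, hg, rfl⟩
    rw [div_le_iff₀ hc, mul_comm]
    refine csInf_le (Sset_bddBelow hM) ?_
    exact ⟨fun v => c * g v, mul_comm t c ▸ fracSub_smul hg hc0 hc1, by rw [fracFlow_smul c C, mul_comm]⟩

lemma Psi_eq_sInf {R : K → K → ℝ} {π : K → ℝ} {A : Finset K} (t : ℝ) :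
    Psi R π A t = if t ≤ meas π A then sInf (Sset R π A Aᶜ t)
      else sInf (Sset R π Aᶜ A (1 - t)) := rfl

lemma Psi_nonneg {P : K → K → ℝ} {π : K → ℝ} (hM : IsMarkov P π) (A : Finset K) (t : ℝ) :
    0 ≤ Psi (rev P π) π A t := by
  rw [Psi_eq_sInf]
  split <;> exact Real.sInf_nonneg (Sset_nonneg hM)

lemma Psi_zero {P : K → K → ℝ} {π : K → ℝ} (hM : IsMarkov P π) {A : Finset K}
    (hA0 : 0 < meas π A) : Psi (rev P π) π A 0 = 0 := by
  rw [Psi_eq_sInf, if_pos hA0.le, sInf_Sset_zero hM]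

lemma Psi_one {P : K → K → ℝ} {π : K → ℝ} (hM : IsMarkov P π) {A : Finset K}
    (hA : meas π A ≤ 1 / 2) : Psi (rev P π) π A 1 = 0 := by
  rw [Psi_eq_sInf, if_neg (by norm_num; linarith), show (1:ℝ) - 1 = 0 by norm_num,
    sInf_Sset_zero hM]

lemma meas_compl {π : K → ℝ} (hsum : ∑ v, π v = 1) (A : Finset K) :
    meas π Aᶜ = 1 - meas π A := by
  have := Finset.sum_add_sum_compl A π
  unfold meas
  linarith

lemma one_indicator_fracSub {π : K → ℝ} (hpi : ∀ v, 0 < π v) (B : Finset K) :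
    IsFracSub π B (fun v => if v ∈ B then (1:ℝ) else 0) (meas π B) := by
  refine ⟨fun v => ?_, fun v hv => by simp [hv], ?_⟩
  · by_cases hv : v ∈ B <;> simp [hv]
  · have h : ∀ v, (if v ∈ B then (1:ℝ) else 0) * π v = if v ∈ B then π v else 0 := by
      intro v; split <;> ring
    rw [Finset.sum_congr rfl fun v _ => h v, Finset.sum_ite_mem, Finset.univ_inter]
    rfl

lemma Psi_at_meas {P : K → K → ℝ} {π : K → ℝ} (hM : IsMarkov P π) (A : Finset K) :
    Psi (rev P π) π A (meas π A)
      = fracFlow (rev P π) π (fun v => if v ∈ A then (1:ℝ) else 0) Aᶜ := by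
  rw [Psi_eq_sInf, if_pos le_rfl]
  set Q := fracFlow (rev P π) π (fun v => if v ∈ A then (1:ℝ) else 0) Aᶜ with hQ
  have hset : Sset (rev P π) π A Aᶜ (meas π A) = {Q} := by
    ext q
    constructor
    · rintro ⟨g, ⟨hg1, hg2, hg3⟩, rfl⟩
      have hsplit : ∑ v ∈ A, g v * π v = meas π A := by
        have hc : ∑ v ∈ Aᶜ, g v * π v = 0 :=
          Finset.sum_eq_zero fun v hv => by rw [hg2 v (Finset.mem_compl.1 hv), zero_mul]
        have := Finset.sum_add_sum_compl A (fun v => g v * π v)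
        rw [hc, add_zero, hg3] at this
        exact this
      have hzero : ∑ v ∈ A, (1 - g v) * π v = 0 := by
        have : ∑ v ∈ A, (1 - g v) * π v = meas π A - ∑ v ∈ A, g v * π v := by
          unfold meas
          rw [← Finset.sum_sub_distrib]
          exact Finset.sum_congr rfl fun v _ => by ring
        rw [this, hsplit, sub_self]
      have hone : ∀ v ∈ A, g v = 1 := by
        intro v hv
        have h := (Finset.sum_eq_zero_iff_of_nonneg fun w hw =>
          mul_nonneg (by linarith [(hg1 w).2]) (hM.piPos w).le).1 hzero v hv
        rcases mul_eq_zero.1 h with h' | h'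
        · linarith
        · exact absurd h' (hM.piPos v).ne'
      show fracFlow (rev P π) π g Aᶜ ∈ {Q}
      rw [Set.mem_singleton_iff, hQ]
      unfold fracFlow
      refine Finset.sum_congr rfl fun v _ => ?_
      by_cases hv : v ∈ A
      · simp only [hone v hv, if_pos hv]
      · simp only [hg2 v hv, if_neg hv]
    · rintro rfl
      exact ⟨_, one_indicator_fracSub hM.piPos A, rfl⟩
  rw [hset, csInf_singleton]

lemma ergflow_swap {P : K → K → ℝ} {π : K → ℝ} (hM : IsMarkov P π) (A : Finset K) :
    ∑ u ∈ A, ∑ v ∈ Aᶜ, π u * P u v = ∑ u ∈ Aᶜ, ∑ v ∈ A, π u * P u v := by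
  have h1 : ∀ u, ∑ v ∈ Aᶜ, π u * P u v = π u - ∑ v ∈ A, π u * P u v := by
    intro u
    have h := Finset.sum_add_sum_compl A (P u)
    rw [hM.rowSum] at h
    rw [← Finset.mul_sum, ← Finset.mul_sum]
    have h2 : π u * (∑ i ∈ A, P u i + ∑ i ∈ Aᶜ, P u i) = π u * 1 := by rw [h]
    rw [mul_add, mul_one] at h2
    linarith
  have h2 : ∀ v, ∑ u ∈ Aᶜ, π u * P u v = π v - ∑ u ∈ A, π u * P u v := by
    intro v
    have h := Finset.sum_add_sum_compl A (fun u => π u * P u v)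
    rw [hM.stationary] at h
    linarith
  calc ∑ u ∈ A, ∑ v ∈ Aᶜ, π u * P u v
      = ∑ u ∈ A, (π u - ∑ v ∈ A, π u * P u v) :=
        Finset.sum_congr rfl fun u _ => h1 u
    _ = ∑ v ∈ A, (π v - ∑ u ∈ A, π u * P u v) := by
        rw [Finset.sum_sub_distrib, Finset.sum_sub_distrib, Finset.sum_comm]
    _ = ∑ v ∈ A, ∑ u ∈ Aᶜ, π u * P u v :=
        Finset.sum_congr rfl fun v _ => (h2 v).symm
    _ = ∑ u ∈ Aᶜ, ∑ v ∈ A, π u * P u v := Finset.sum_comm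

lemma ind_flow_eq {P : K → K → ℝ} {π : K → ℝ} (hM : IsMarkov P π) (B C : Finset K) :
    fracFlow (rev P π) π (fun v => if v ∈ B then (1:ℝ) else 0) C
      = ∑ v ∈ B, ∑ c ∈ C, π c * P c v := by
  have hrev : ∀ v c, π v * rev P π v c = π c * P c v := by
    intro v c
    unfold rev
    rw [mul_comm, div_mul_cancel₀ _ (hM.piPos v).ne']
  unfold fracFlow setProb
  have h : ∀ v, (if v ∈ B then (1:ℝ) else 0) * π v * (∑ c ∈ C, rev P π v c)
      = if v ∈ B then ∑ c ∈ C, π c * P c v else 0 := by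
    intro v
    split
    · rw [one_mul, Finset.mul_sum]
      exact Finset.sum_congr rfl fun c _ => hrev v c
    · ring
  rw [Finset.sum_congr rfl fun v _ => h v, Finset.sum_ite_mem, Finset.univ_inter]

lemma flow_symm {P : K → K → ℝ} {π : K → ℝ} (hM : IsMarkov P π) (A : Finset K) :
    fracFlow (rev P π) π (fun v => if v ∈ Aᶜ then (1:ℝ) else 0) A
      = fracFlow (rev P π) π (fun v => if v ∈ A then (1:ℝ) else 0) Aᶜ := by
  rw [ind_flow_eq hM, ind_flow_eq hM]
  rw [Finset.sum_comm, ergflow_swap hM A]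
  exact Finset.sum_comm

lemma psi_ratio_left {P : K → K → ℝ} {π : K → ℝ} (hM : IsMarkov P π) {A : Finset K}
    (hA0 : 0 < meas π A) {s t : ℝ} (hs : 0 ≤ s) (hst : s ≤ t) (ht : t ≤ meas π A) :
    t * Psi (rev P π) π A s ≤ s * Psi (rev P π) π A t := by
  rcases eq_or_lt_of_le (hs.trans hst) with rfl | htpos
  · obtain rfl : s = 0 := le_antisymm hst hs
    simp
  · have hc0 : 0 ≤ s / t := div_nonneg hs htpos.le
    have hc1 : s / t ≤ 1 := (div_le_one htpos).2 hst
    have key := sInf_Sset_smul hM A Aᶜ hc0 hc1 htpos.le ht hA0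
    rw [div_mul_cancel₀ s htpos.ne'] at key
    rw [Psi_eq_sInf, Psi_eq_sInf, if_pos ht, if_pos ((hst.trans ht))]
    calc t * sInf (Sset (rev P π) π A Aᶜ s)
        ≤ t * (s / t * sInf (Sset (rev P π) π A Aᶜ t)) :=
          mul_le_mul_of_nonneg_left key htpos.le
      _ = s * sInf (Sset (rev P π) π A Aᶜ t) := by
          field_simp

lemma psi_ratio_right {P : K → K → ℝ} {π : K → ℝ} (hM : IsMarkov P π) {A : Finset K}
    (hA0 : 0 < meas π A) (hA : meas π A ≤ 1 / 2) {s t : ℝ}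
    (hs : meas π A ≤ s) (hst : s ≤ t) (ht : t ≤ 1) :
    (1 - s) * Psi (rev P π) π A t ≤ (1 - t) * Psi (rev P π) π A s := by
  have hAc : meas π Aᶜ = 1 - meas π A := meas_compl hM.piSum A
  have hAc0 : 0 < meas π Aᶜ := by rw [hAc]; linarith
  rcases eq_or_lt_of_le hst with rfl | hstlt
  · linarith [mul_le_mul_of_nonneg_right (le_refl (1 - s)) (Psi_nonneg hM A s)]
  rcases eq_or_lt_of_le hs with rfl | hslt
  · -- s = meas π A : junction case
    set a := meas π A with ha
    have hQ := Psi_at_meas hM A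
    have hmem : (1 - t) / meas π Aᶜ * fracFlow (rev P π) π
        (fun v => if v ∈ Aᶜ then (1:ℝ) else 0) A ∈ Sset (rev P π) π Aᶜ A (1 - t) := by
      refine ⟨fun v => if v ∈ Aᶜ then (1 - t) / meas π Aᶜ else 0, ?_, ?_⟩
      · have := indicator_fracSub hM.piPos Aᶜ hAc0 (t := 1 - t) (by linarith)
          (by rw [hAc]; linarith)
        exact this
      · exact (ind_flow_smul _ Aᶜ A).symm
    have hle : Psi (rev P π) π A t ≤ (1 - t) / meas π Aᶜ *
        fracFlow (rev P π) π (fun v => if v ∈ Aᶜ then (1:ℝ) else 0) A := by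
      rw [Psi_eq_sInf, if_neg (by push_neg; exact hstlt)]
      exact csInf_le (Sset_bddBelow hM) hmem
    rw [flow_symm hM A, ← hQ] at hle
    have h1a : (0:ℝ) < 1 - a := by linarith [hAc0]
    calc (1 - a) * Psi (rev P π) π A t
        ≤ (1 - a) * ((1 - t) / meas π Aᶜ * Psi (rev P π) π A a) := by
          exact mul_le_mul_of_nonneg_left hle (by linarith)
      _ = (1 - t) * Psi (rev P π) π A a := by
          have hne : (1:ℝ) - a ≠ 0 := ne_of_gt h1a
          rw [hAc]
          field_simp
  · -- meas π A < s
    have hs1 : s < 1 := lt_of_lt_of_le hstlt ht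
    have hc0 : 0 ≤ (1 - t) / (1 - s) := div_nonneg (by linarith) (by linarith)
    have hc1 : (1 - t) / (1 - s) ≤ 1 := (div_le_one (by linarith)).2 (by linarith)
    have key := sInf_Sset_smul hM Aᶜ A hc0 hc1 (t := 1 - s) (by linarith)
      (by rw [hAc]; linarith) hAc0
    rw [div_mul_cancel₀ (1 - t) (by linarith : (1:ℝ) - s ≠ 0)] at key
    rw [Psi_eq_sInf, Psi_eq_sInf, if_neg (by push_neg; linarith), if_neg (by push_neg; linarith)]
    calc (1 - s) * sInf (Sset (rev P π) π Aᶜ A (1 - t))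
        ≤ (1 - s) * ((1 - t) / (1 - s) * sInf (Sset (rev P π) π Aᶜ A (1 - s))) :=
          mul_le_mul_of_nonneg_left key (by linarith)
      _ = (1 - t) * sInf (Sset (rev P π) π Aᶜ A (1 - s)) := by
          have hne : (1:ℝ) - s ≠ 0 := by linarith
          field_simp

lemma f_monoOn {P : K → K → ℝ} {π : K → ℝ} (hM : IsMarkov P π) {A : Finset K}
    (hA0 : 0 < meas π A) :
    MonotoneOn (fun t => Psi (rev P π) π A t / t) (Set.Icc 0 (meas π A)) := by
  intro s hs t ht hst
  by_cases hs0 : s = 0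
  · subst hs0
    simp only [Psi_zero hM hA0, zero_div]
    exact div_nonneg (Psi_nonneg hM A t) ht.1
  · have hspos : 0 < s := lt_of_le_of_ne hs.1 (Ne.symm hs0)
    have htpos : 0 < t := lt_of_lt_of_le hspos hst
    have key := psi_ratio_left hM hA0 hs.1 hst ht.2
    rw [div_le_div_iff₀ hspos htpos]
    nlinarith [key]

lemma psi_monoOn {P : K → K → ℝ} {π : K → ℝ} (hM : IsMarkov P π) {A : Finset K}
    (hA0 : 0 < meas π A) :
    MonotoneOn (Psi (rev P π) π A) (Set.Icc 0 (meas π A)) := by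
  intro s hs t ht hst
  rcases eq_or_lt_of_le (hs.1.trans hst) with rfl | htpos
  · obtain rfl : s = 0 := le_antisymm hst hs.1
    exact le_refl _
  · have key := psi_ratio_left hM hA0 hs.1 hst ht.2
    nlinarith [Psi_nonneg hM A t, mul_nonneg (sub_nonneg.2 hst) (Psi_nonneg hM A t)]

lemma psi_antiOn {P : K → K → ℝ} {π : K → ℝ} (hM : IsMarkov P π) {A : Finset K}
    (hA0 : 0 < meas π A) (hA : meas π A ≤ 1 / 2) :
    AntitoneOn (Psi (rev P π) π A) (Set.Icc (meas π A) 1) := by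
  intro s hs t ht hst
  rcases eq_or_lt_of_le (hst.trans ht.2) with heq | hs1
  · have h' : t = s := le_antisymm (by rw [heq]; exact ht.2) hst
    rw [h']
  · have key := psi_ratio_right hM hA0 hA hs.1 hst ht.2
    nlinarith [Psi_nonneg hM A s, mul_nonneg (sub_nonneg.2 hst) (Psi_nonneg hM A s)]

lemma h2_antiOn {P : K → K → ℝ} {π : K → ℝ} (hM : IsMarkov P π) {A : Finset K}
    (hA0 : 0 < meas π A) (hA : meas π A ≤ 1 / 2) :
    AntitoneOn (fun t => Psi (rev P π) π A t / t) (Set.Icc (meas π A) (1/2)) := by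
  intro s hs t ht hst
  have h1 : Psi (rev P π) π A t ≤ Psi (rev P π) π A s :=
    psi_antiOn hM hA0 hA ⟨hs.1, hs.2.trans (by norm_num)⟩ ⟨ht.1, ht.2.trans (by norm_num)⟩ hst
  have hspos : 0 < s := lt_of_lt_of_le hA0 hs.1
  exact div_le_div₀ (Psi_nonneg hM A s) h1 hspos hst

lemma h3_antiOn {P : K → K → ℝ} {π : K → ℝ} (hM : IsMarkov P π) {A : Finset K}
    (hA0 : 0 < meas π A) (hA : meas π A ≤ 1 / 2) :
    AntitoneOn (fun t => Psi (rev P π) π A t / (1 - t)) (Set.Icc (1/2 : ℝ) 1) := by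
  intro s hs t ht hst
  by_cases ht1 : t = 1
  · subst ht1
    simp only [sub_self, div_zero]
    exact div_nonneg (Psi_nonneg hM A s) (by linarith [hs.2])
  · have ht1' : t < 1 := lt_of_le_of_ne ht.2 ht1
    have hs1 : s < 1 := lt_of_le_of_lt hst ht1'
    have key := psi_ratio_right hM hA0 hA (hA.trans hs.1) hst ht.2
    rw [div_le_div_iff₀ (by linarith) (by linarith)]
    nlinarith [key]

section Cheb
open intervalIntegral

lemma cheb_inc {a : ℝ} (ha : 0 ≤ a) {f : ℝ → ℝ}
    (hf : MonotoneOn f (Set.Icc 0 a)) (hf0 : 0 ≤ f 0) :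
    (a / 2) * ∫ t in (0:ℝ)..a, f t ≤ ∫ t in (0:ℝ)..a, t * f t := by
  have huIcc : Set.uIcc (0:ℝ) a = Set.Icc 0 a := Set.uIcc_of_le ha
  have hfnn : ∀ t ∈ Set.Icc (0:ℝ) a, 0 ≤ f t := fun t ht =>
    hf0.trans (hf (Set.left_mem_Icc.2 ha) ht ht.1)
  have hfi : IntervalIntegrable f MeasureTheory.volume 0 a :=
    MonotoneOn.intervalIntegrable (huIcc ▸ hf)
  have hgi : IntervalIntegrable (fun t => t * f t) MeasureTheory.volume 0 a := by
    apply MonotoneOn.intervalIntegrable (u := fun t => t * f t)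
    rw [huIcc]
    intro s hs t ht hst
    calc s * f s ≤ t * f s := by nlinarith [hfnn s hs]
    _ ≤ t * f t := by nlinarith [hf hs ht hst, ht.1]
  set m := f (a/2) with hm
  have key : (0:ℝ) ≤ ∫ t in (0:ℝ)..a, (t - a/2) * (f t - m) := by
    apply integral_nonneg ha
    intro t ht
    rcases le_total t (a/2) with h | h
    · have : f t ≤ m := hf ht (by constructor <;> linarith) h
      nlinarith
    · have : m ≤ f t := hf (by constructor <;> linarith) ht h
      nlinarith
  have expand : ∫ t in (0:ℝ)..a, (t - a/2) * (f t - m)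
      = (∫ t in (0:ℝ)..a, t * f t) - (a/2) * (∫ t in (0:ℝ)..a, f t)
        - m * (a^2/2) + m * (a/2) * a := by
    have h1 : ∀ t : ℝ, (t - a/2) * (f t - m)
        = (t * f t) - (a/2) * f t - (m * t - m * (a/2)) := by intro t; ring
    rw [integral_congr (g := fun t => (t * f t) - (a/2) * f t - (m * t - m * (a/2)))
      (fun t _ => h1 t)]
    rw [integral_sub (hgi.sub (hfi.const_mul (a/2)))
      ((by fun_prop : Continuous fun t : ℝ => m * t - m * (a/2)).intervalIntegrable 0 a),
      integral_sub hgi (hfi.const_mul (a/2)), intervalIntegral.integral_const_mul,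
      integral_sub ((by fun_prop : Continuous fun t : ℝ => m * t).intervalIntegrable 0 a)
        (continuous_const.intervalIntegrable 0 a),
      intervalIntegral.integral_const, intervalIntegral.integral_const_mul, integral_id]
    simp [smul_eq_mul]; ring
  nlinarith [key, expand]

lemma cheb_dec {f : ℝ → ℝ}
    (hf : AntitoneOn f (Set.Icc (1/2:ℝ) 1)) (hf1 : 0 ≤ f 1) :
    (1 / 4) * ∫ t in (1/2:ℝ)..1, f t ≤ ∫ t in (1/2:ℝ)..1, (1 - t) * f t := by
  have hle : (1/2:ℝ) ≤ 1 := by norm_num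
  have huIcc : Set.uIcc (1/2:ℝ) 1 = Set.Icc (1/2:ℝ) 1 := Set.uIcc_of_le hle
  have hfnn : ∀ t ∈ Set.Icc (1/2:ℝ) 1, 0 ≤ f t := fun t ht =>
    hf1.trans (hf ht (Set.right_mem_Icc.2 hle) ht.2)
  have hfi : IntervalIntegrable f MeasureTheory.volume (1/2) 1 :=
    AntitoneOn.intervalIntegrable (huIcc ▸ hf)
  have hgi : IntervalIntegrable (fun t => (1 - t) * f t) MeasureTheory.volume (1/2) 1 := by
    apply AntitoneOn.intervalIntegrable (u := fun t => (1 - t) * f t)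
    rw [huIcc]
    intro s hs t ht hst
    calc (1 - t) * f t ≤ (1 - s) * f t := by nlinarith [hfnn t ht]
    _ ≤ (1 - s) * f s := by nlinarith [hf hs ht hst, hs.2]
  set m := f (3/4) with hm
  have key : (0:ℝ) ≤ ∫ t in (1/2:ℝ)..1, ((1 - t) - 1/4) * (f t - m) := by
    apply integral_nonneg hle
    intro t ht
    rcases le_total t (3/4) with h | h
    · have : m ≤ f t := hf ht (by constructor <;> linarith) h
      nlinarith
    · have : f t ≤ m := hf (by constructor <;> linarith) ht h
      nlinarith
  have expand : ∫ t in (1/2:ℝ)..1, ((1 - t) - 1/4) * (f t - m)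
      = (∫ t in (1/2:ℝ)..1, (1 - t) * f t) - (1/4) * (∫ t in (1/2:ℝ)..1, f t)
        - (m * ∫ t in (1/2:ℝ)..1, (3/4 - t)) := by
    have h1 : ∀ t : ℝ, ((1 - t) - 1/4) * (f t - m)
        = ((1 - t) * f t) - (1/4) * f t - m * (3/4 - t) := by intro t; ring
    rw [integral_congr (g := fun t => ((1 - t) * f t) - (1/4) * f t - m * (3/4 - t))
      (fun t _ => h1 t)]
    rw [integral_sub (hgi.sub (hfi.const_mul (1/4)))
      ((by fun_prop : Continuous fun t : ℝ => m * (3/4 - t)).intervalIntegrable _ _),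
      integral_sub hgi (hfi.const_mul (1/4)), intervalIntegral.integral_const_mul,
      intervalIntegral.integral_const_mul]
  have hz : ∫ t in (1/2:ℝ)..1, (3/4 - t) = 0 := by
    rw [integral_sub (continuous_const.intervalIntegrable _ _)
      (continuous_id'.intervalIntegrable _ _), intervalIntegral.integral_const, integral_id]
    norm_num
  rw [hz] at expand
  nlinarith [key, expand]

end Cheb

end Aux
-- SPLICE END

/-- for a lazy, irreducible, aperiodic chain and `0 < π(A) ≤ 1/2`,
`ψ̄_gl(A) ≥ (1/2)·ψ̄_mod(A)`. -/
theorem global_ge_half_modified_spread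
    (P : K → K → ℝ) (π : K → ℝ) (A : Finset K)
    (hM : IsMarkov P π) (hlazy : IsLazy P)
    (hirr : MCIrreducible P) (hap : MCAperiodic P)
    (hA0 : 0 < meas π A) (hA : meas π A ≤ 1 / 2) :
    psiGl (rev P π) π A ≥ (1 / 2) * psiMod (rev P π) π A := by
  have hFnn : ∀ t, 0 ≤ Psi (rev P π) π A t := Psi_nonneg hM A
  have hF0 : Psi (rev P π) π A 0 = 0 := Psi_zero hM hA0
  have hF1 : Psi (rev P π) π A 1 = 0 := Psi_one hM hA
  have mono1 := f_monoOn hM hA0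
  have mono0 := psi_monoOn hM hA0
  have anti := psi_antiOn hM hA0 hA
  have anti2 := h2_antiOn hM hA0 hA
  have anti3 := h3_antiOn hM hA0 hA
  set F := Psi (rev P π) π A with hFdef
  set a := meas π A with hadef
  have ha0 : (0:ℝ) < a := hA0
  have ha1 : a ≤ (1/2:ℝ) := hA
  set G := fun t => F t / min t (1 - t) with hGdef
  have hGeq1 : ∀ t ∈ Set.Icc (0:ℝ) (1/2), G t = F t / t := by
    intro t ht
    simp only [hGdef]
    rw [min_eq_left (by linarith [ht.1, ht.2])]
  have hGeq3 : ∀ t ∈ Set.Icc (1/2:ℝ) 1, G t = F t / (1 - t) := by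
    intro t ht
    simp only [hGdef]
    rw [min_eq_right (by linarith [ht.1, ht.2])]
  have u1 : Set.uIcc (0:ℝ) a = Set.Icc 0 a := Set.uIcc_of_le ha0.le
  have u2 : Set.uIcc a (1/2:ℝ) = Set.Icc a (1/2) := Set.uIcc_of_le ha1
  have u3 : Set.uIcc (1/2:ℝ) 1 = Set.Icc (1/2) 1 := Set.uIcc_of_le (by norm_num)
  -- integrability of F
  have iF1 : IntervalIntegrable F volume 0 a :=
    MonotoneOn.intervalIntegrable (u1 ▸ mono0)
  have iF2 : IntervalIntegrable F volume a (1/2) :=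
    AntitoneOn.intervalIntegrable (u2 ▸ (anti.mono (Set.Icc_subset_Icc le_rfl (by norm_num))))
  have iF3 : IntervalIntegrable F volume (1/2) 1 :=
    AntitoneOn.intervalIntegrable (u3 ▸ (anti.mono (Set.Icc_subset_Icc ha1 le_rfl)))
  -- integrability of G and helpers
  have iFt2 : IntervalIntegrable (fun t => F t / t) volume a (1/2) :=
    AntitoneOn.intervalIntegrable (u2 ▸ anti2)
  have iG1 : IntervalIntegrable G volume 0 a := by
    apply MonotoneOn.intervalIntegrable (u := G)
    rw [u1]
    intro x hx y hy hxy
    rw [hGeq1 x ⟨hx.1, hx.2.trans ha1⟩, hGeq1 y ⟨hy.1, hy.2.trans ha1⟩]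
    exact mono1 hx hy hxy
  have iG2 : IntervalIntegrable G volume a (1/2) := by
    apply AntitoneOn.intervalIntegrable (u := G)
    rw [u2]
    intro x hx y hy hxy
    rw [hGeq1 x ⟨ha0.le.trans hx.1, hx.2⟩, hGeq1 y ⟨ha0.le.trans hy.1, hy.2⟩]
    exact anti2 hx hy hxy
  have iG3 : IntervalIntegrable G volume (1/2) 1 := by
    apply AntitoneOn.intervalIntegrable (u := G)
    rw [u3]
    intro x hx y hy hxy
    rw [hGeq3 x hx, hGeq3 y hy]
    exact anti3 hx hy hxy
  -- splitting the integrals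
  have eF12 := intervalIntegral.integral_add_adjacent_intervals iF1 iF2
  have eF123 := intervalIntegral.integral_add_adjacent_intervals (iF1.trans iF2) iF3
  have eG12 := intervalIntegral.integral_add_adjacent_intervals iG1 iG2
  have eG123 := intervalIntegral.integral_add_adjacent_intervals (iG1.trans iG2) iG3
  -- piece 1
  have hG1eq : ∫ t in (0:ℝ)..a, G t = ∫ t in (0:ℝ)..a, F t / t := by
    apply intervalIntegral.integral_congr
    intro t ht
    rw [u1] at ht
    exact hGeq1 t ⟨ht.1, ht.2.trans ha1⟩
  have E1 : (a/2) * (∫ t in (0:ℝ)..a, G t) ≤ ∫ t in (0:ℝ)..a, F t := by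
    have cheb := cheb_inc ha0.le mono1 (by simp [hF0])
    have emul : ∫ t in (0:ℝ)..a, t * (F t / t) = ∫ t in (0:ℝ)..a, F t := by
      apply intervalIntegral.integral_congr
      intro t _
      rcases eq_or_ne t 0 with rfl | h0
      · simp [hF0]
      · show t * (F t / t) = F t
        rw [mul_comm, div_mul_cancel₀ _ h0]
    rw [hG1eq]
    exact cheb.trans (le_of_eq emul)
  -- piece 2
  have hG2eq : ∫ t in a..(1/2:ℝ), G t = ∫ t in a..(1/2:ℝ), F t / t := by
    apply intervalIntegral.integral_congr
    intro t ht
    rw [u2] at ht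
    exact hGeq1 t ⟨ha0.le.trans ht.1, ht.2⟩
  have E2 : (a/2) * (∫ t in a..(1/2:ℝ), G t) ≤ ∫ t in a..(1/2:ℝ), F t := by
    rw [hG2eq, ← intervalIntegral.integral_const_mul]
    apply intervalIntegral.integral_mono_on ha1 (iFt2.const_mul (a/2)) iF2
    intro t ht
    have htpos : 0 < t := lt_of_lt_of_le ha0 ht.1
    have h1 : F t / t ≤ F t / a := by
      rw [div_le_div_iff₀ htpos ha0]
      nlinarith [hFnn t, ht.1]
    have h2 : (a/2) * (F t / t) ≤ (a/2) * (F t / a) :=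
      mul_le_mul_of_nonneg_left h1 (by linarith)
    have h3 : (a/2) * (F t / a) = F t / 2 := by
      field_simp
    nlinarith [hFnn t]
  -- piece 3
  have hG3eq : ∫ t in (1/2:ℝ)..1, G t = ∫ t in (1/2:ℝ)..1, F t / (1 - t) := by
    apply intervalIntegral.integral_congr
    intro t ht
    rw [u3] at ht
    exact hGeq3 t ht
  have E3 : (a/2) * (∫ t in (1/2:ℝ)..1, G t) ≤ ∫ t in (1/2:ℝ)..1, F t := by
    have cheb := cheb_dec anti3 (by simp [hF1])
    have emul : ∫ t in (1/2:ℝ)..1, (1 - t) * (F t / (1 - t)) = ∫ t in (1/2:ℝ)..1, F t := by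
      apply intervalIntegral.integral_congr
      intro t _
      rcases eq_or_ne t 1 with rfl | h0
      · simp [hF1]
      · show (1 - t) * (F t / (1 - t)) = F t
        rw [mul_comm, div_mul_cancel₀ _ (sub_ne_zero.2 (Ne.symm h0))]
    have hJ3 : 0 ≤ ∫ t in (1/2:ℝ)..1, F t / (1 - t) :=
      intervalIntegral.integral_nonneg (by norm_num)
        (fun t ht => div_nonneg (hFnn t) (by linarith [ht.2]))
    rw [hG3eq]
    calc (a/2) * (∫ t in (1/2:ℝ)..1, F t / (1 - t))
        ≤ (1/4) * (∫ t in (1/2:ℝ)..1, F t / (1 - t)) :=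
          mul_le_mul_of_nonneg_right (by linarith) hJ3
      _ ≤ ∫ t in (1/2:ℝ)..1, (1 - t) * (F t / (1 - t)) := cheb
      _ = ∫ t in (1/2:ℝ)..1, F t := emul
  -- combine
  have main : (a/2) * (∫ t in (0:ℝ)..1, G t) ≤ ∫ t in (0:ℝ)..1, F t := by
    rw [← eF123, ← eF12, ← eG123, ← eG12, mul_add, mul_add]
    linarith [E1, E2, E3]
  -- conclude
  rw [ge_iff_le]
  show (1/2) * ((∫ t in (0:ℝ)..1, G t) / a) ≤ (∫ t in (0:ℝ)..1, F t) / a^2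
  have h2 : (1/2) * ((∫ t in (0:ℝ)..1, G t) / a)
      = ((a/2) * (∫ t in (0:ℝ)..1, G t)) / a^2 := by
    field_simp
  rw [h2]
  exact (div_le_div_iff_of_pos_right (pow_pos ha0 2)).2 main
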